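/- Let T be an ergodic measure-preserving transformation on a probability space (X, 𝒜, μ), let E ⊆ X have positive measure, and set Eₙ = {x ∈ E : τ_E(x) = n}, where τ_E is the first return time of points of E to E. Then ∑ₙ n·μ(Eₙ) = μ(X) = 1 (Kac's lemma). -/

import Mathlib

open MeasureTheory Set

theorem kacs_lemma
    {X : Type*} [MeasurableSpace X] (μ : Measure X) [IsProbabilityMeasure μ]
    (T : X → X) (hT : Ergodic T μ)
    (E : Set X) (hE : MeasurableSet E) (hpos : 0 < μ E) :
    ∑' n : ℕ, (n : ENNReal) *
        μ (E ∩ {x | T^[n] x ∈ E ∧ ∀ k, 1 ≤ k → k < n → T^[k] x ∉ E}) = 1 := by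
  classical
  have hTm : Measurable T := hT.toMeasurePreserving.measurable
  set En : ℕ → Set X :=
    fun n => E ∩ {x | T^[n] x ∈ E ∧ ∀ k, 1 ≤ k → k < n → T^[k] x ∉ E} with hEn
  set f : ℕ → ENNReal := fun n => μ (En n) with hf
  set A : ℕ → Set X := fun k => {x | T^[k] x ∈ E ∧ ∀ j < k, T^[j] x ∉ E} with hA
  have hAm : ∀ k, MeasurableSet (A k) := by
    intro k
    have : A k = (T^[k] ⁻¹' E) ∩ ⋂ j ∈ Finset.range k, (T^[j]) ⁻¹' Eᶜ := by
      ext x; simp [hA]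
    rw [this]
    exact ((hTm.iterate k) hE).inter
      (MeasurableSet.biInter (Set.to_countable _) fun j _ => (hTm.iterate j) hE.compl)
  have hEnm : ∀ n, MeasurableSet (En n) := by
    intro n
    have : En n = E ∩ ((T^[n] ⁻¹' E) ∩ ⋂ j ∈ Finset.Ico 1 n, (T^[j]) ⁻¹' Eᶜ) := by
      ext x; simp [hEn]
    rw [this]
    exact hE.inter (((hTm.iterate n) hE).inter
      (MeasurableSet.biInter (Set.to_countable _) fun j _ => (hTm.iterate j) hE.compl))
  -- key splitting
  have hsplit : ∀ k, T ⁻¹' (A k) = A (k + 1) ∪ En (k + 1) := by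
    intro k
    ext x
    simp only [hA, hEn, mem_preimage, mem_setOf_eq, mem_union, mem_inter_iff,
      ← Function.iterate_succ_apply]
    constructor
    · rintro ⟨h1, h2⟩
      by_cases hx : x ∈ E
      · refine Or.inr ⟨hx, h1, fun j hj1 hj2 => ?_⟩
        obtain ⟨i, rfl⟩ : ∃ i, j = i + 1 := ⟨j - 1, by omega⟩
        exact h2 i (by omega)
      · refine Or.inl ⟨h1, fun j hj => ?_⟩
        rcases Nat.eq_zero_or_pos j with h | h
        · simpa [h] using hx
        · obtain ⟨i, rfl⟩ : ∃ i, j = i + 1 := ⟨j - 1, by omega⟩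
          exact h2 i (by omega)
    · rintro (⟨h1, h2⟩ | ⟨hx, h1, h2⟩)
      · exact ⟨h1, fun j hj => h2 (j + 1) (by omega)⟩
      · exact ⟨h1, fun j hj => h2 (j + 1) (by omega) (by omega)⟩
  have hdisj' : ∀ k, Disjoint (A (k + 1)) (En (k + 1)) := by
    intro k
    rw [Set.disjoint_left]
    rintro x ⟨_, h2⟩ ⟨hx, _⟩
    exact h2 0 (by omega) hx
  have hstep : ∀ k, μ (A k) = μ (A (k + 1)) + f (k + 1) := by
    intro k
    rw [← hT.toMeasurePreserving.measure_preimage (hAm k).nullMeasurableSet, hsplit k,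
      measure_union (hdisj' k) (hEnm (k + 1))]
  have hA0 : A 0 = E := by ext x; simp [hA]
  -- partial sums
  have hpartial : ∀ k, μ (A k) + ∑ i ∈ Finset.range k, f (i + 1) = μ E := by
    intro k
    induction k with
    | zero => simp [hA0]
    | succ k ih =>
      rw [Finset.sum_range_succ, ← add_assoc, add_right_comm, ← hstep k]
      exact ih
  -- the never-hitting set is null
  set N : Set X := {x | ∀ j, T^[j] x ∉ E} with hN
  have hNm : MeasurableSet N := by
    have : N = ⋂ j, (T^[j]) ⁻¹' Eᶜ := by ext x; simp [hN]
    rw [this]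
    exact MeasurableSet.iInter fun j => (hTm.iterate j) hE.compl
  have hNsub : N ⊆ T ⁻¹' N := fun x hx j => by
    simpa [Function.iterate_succ_apply] using hx (j + 1)
  have hNnull : μ N = 0 := by
    rcases hT.ae_empty_or_univ_of_ae_le_preimage' hNm.nullMeasurableSet
        (HasSubset.Subset.eventuallyLE hNsub) (measure_ne_top μ N) with h | h
    · exact ae_eq_empty.mp h
    · exfalso
      have hN1 : μ N = 1 := by rw [measure_congr h, measure_univ]
      have hEc : E ⊆ Nᶜ := fun x hx hxN => hxN 0 (by simpa using hx)
      have hle : μ E ≤ μ Nᶜ := measure_mono hEc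
      rw [measure_compl hNm (measure_ne_top μ N), hN1, measure_univ, tsub_self] at hle
      exact hpos.ne' (le_antisymm hle zero_le)
  -- the A k cover the space up to N, pairwise disjointly
  have hApd : Pairwise (Function.onFun Disjoint A) := by
    have key : ∀ k l, k < l → Disjoint (A k) (A l) := by
      intro k l h
      rw [Set.disjoint_left]
      rintro x ⟨h1, _⟩ ⟨_, h2⟩
      exact h2 k h h1
    intro k l hkl
    rcases hkl.lt_or_gt with h | h
    · exact key k l h
    · exact (key l k h).symm
  have hcover : (univ : Set X) ⊆ N ∪ ⋃ k, A k := by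
    intro x _
    by_cases hx : ∃ j, T^[j] x ∈ E
    · right
      exact mem_iUnion.mpr ⟨Nat.find hx, Nat.find_spec hx, fun j hj => Nat.find_min hx hj⟩
    · left
      exact fun j hj => hx ⟨j, hj⟩
  have hAsum : ∑' k, μ (A k) = 1 := by
    have h1 : (1 : ENNReal) ≤ ∑' k, μ (A k) := by
      calc (1 : ENNReal) = μ univ := measure_univ.symm
        _ ≤ μ (N ∪ ⋃ k, A k) := measure_mono hcover
        _ ≤ μ N + μ (⋃ k, A k) := measure_union_le _ _
        _ = ∑' k, μ (A k) := by rw [hNnull, zero_add, measure_iUnion hApd hAm]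
    have h2 : ∑' k, μ (A k) ≤ 1 := by
      rw [← measure_iUnion hApd hAm]
      exact (measure_mono (subset_univ _)).trans_eq measure_univ
    exact le_antisymm h2 h1
  -- total mass of returns
  have hEnpd : Pairwise (Function.onFun Disjoint fun i => En (i + 1)) := by
    have key : ∀ k l, k < l → Disjoint (En (k + 1)) (En (l + 1)) := by
      intro k l h
      rw [Set.disjoint_left]
      rintro x ⟨_, h1, _⟩ ⟨_, _, h2⟩
      exact h2 (k + 1) (by omega) (by omega) h1
    intro k l hkl
    rcases hkl.lt_or_gt with h | h
    · exact key k l h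
    · exact (key l k h).symm
  have hEtot : μ E = ∑' i, f (i + 1) := by
    have hsub : E \ (⋃ i, En (i + 1)) ⊆ T ⁻¹' N := by
      rintro x ⟨hxE, hxU⟩
      intro j hj
      rw [← Function.iterate_succ_apply] at hj
      have hex : ∃ m, T^[m + 1] x ∈ E := ⟨j, hj⟩
      refine hxU (mem_iUnion.mpr ⟨Nat.find hex, hxE, Nat.find_spec hex, fun k hk1 hk2 => ?_⟩)
      obtain ⟨i, rfl⟩ : ∃ i, k = i + 1 := ⟨k - 1, by omega⟩
      exact Nat.find_min hex (by omega)
    have hle : μ E ≤ μ (⋃ i, En (i + 1)) := by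
      calc μ E ≤ μ (E ∩ ⋃ i, En (i + 1)) + μ (E \ ⋃ i, En (i + 1)) :=
            measure_le_inter_add_diff μ E _
        _ ≤ μ (⋃ i, En (i + 1)) + μ (T ⁻¹' N) :=
            add_le_add (measure_mono inter_subset_right) (measure_mono hsub)
        _ = μ (⋃ i, En (i + 1)) := by
            rw [hT.toMeasurePreserving.measure_preimage hNm.nullMeasurableSet, hNnull, add_zero]
    have hge : μ (⋃ i, En (i + 1)) ≤ μ E :=
      measure_mono (iUnion_subset fun i => inter_subset_left)
    rw [le_antisymm hle hge, measure_iUnion hEnpd fun i => hEnm (i + 1)]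
  -- μ (A k) as a tail sum
  have hAk : ∀ k, μ (A k) = ∑' i, f (i + k + 1) := by
    intro k
    have h1 : (∑ i ∈ Finset.range k, (fun i => f (i + 1)) i)
        + ∑' i, (fun i => f (i + 1)) (i + k) = ∑' i, (fun i => f (i + 1)) i :=
      Summable.sum_add_tsum_nat_add' (f := fun i => f (i + 1)) (k := k) ENNReal.summable
    have hPfin : ∑ i ∈ Finset.range k, f (i + 1) ≠ ⊤ := by
      have hle : ∑ i ∈ Finset.range k, f (i + 1) ≤ μ E := le_add_self.trans (hpartial k).le
      exact (hle.trans_lt (measure_lt_top μ E)).ne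
    have key : ∑ i ∈ Finset.range k, f (i + 1) + ∑' i, f (i + k + 1) = μ E := by
      rw [hEtot]
      simpa using h1
    have hp := hpartial k
    rw [add_comm] at hp
    rw [← key] at hp
    exact ((ENNReal.add_right_inj hPfin).mp hp.symm).symm
  -- indicator rewriting of the tail sum
  have hind : ∀ k, (∑' i, f (i + k + 1)) = ∑' n, (if k < n then f n else 0) := by
    intro k
    have h1 : (∑ n ∈ Finset.range (k + 1), (if k < n then f n else 0))
        + ∑' i, (if k < i + (k + 1) then f (i + (k + 1)) else 0)
        = ∑' n, (if k < n then f n else 0) :=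
      Summable.sum_add_tsum_nat_add' (f := fun n => if k < n then f n else 0) (k := k + 1)
        ENNReal.summable
    have h2 : ∑ n ∈ Finset.range (k + 1), (if k < n then f n else 0) = 0 :=
      Finset.sum_eq_zero fun n hn => if_neg (by simp at hn; omega)
    rw [h2, zero_add] at h1
    rw [← h1]
    exact tsum_congr fun i => by rw [if_pos (by omega), show i + (k + 1) = i + k + 1 by omega]
  -- inner sum computation
  have hinner : ∀ n : ℕ, (∑' k : ℕ, if k < n then f n else 0) = (n : ENNReal) * f n := by
    intro n
    rw [tsum_eq_sum (s := Finset.range n) (fun b hb => if_neg (by simp at hb; omega))]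
    rw [Finset.sum_congr rfl fun k hk => if_pos (Finset.mem_range.mp hk),
      Finset.sum_const, Finset.card_range, nsmul_eq_mul]
  -- conclude
  calc ∑' n : ℕ, (n : ENNReal) * f n
      = ∑' (n : ℕ) (k : ℕ), if k < n then f n else 0 := tsum_congr fun n => (hinner n).symm
    _ = ∑' (k : ℕ) (n : ℕ), if k < n then f n else 0 := ENNReal.tsum_comm
    _ = ∑' k, μ (A k) := tsum_congr fun k => by rw [hAk k, hind k]
    _ = 1 := hAsum
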